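/- Let K ⊆ ℝⁿ be a compact convex set with B(0,r) ⊆ K ⊆ B(0,R) for 0 < r ≤ R, let 0 ≤ δ < r, and let x ∈ ℝⁿ, x ≠ 0. For d ∈ K define α_x(d) = max{α ∈ ℝ : d + α·x ∈ K} and h_x(d) = −α_x(d)·‖x‖₂. Then h_x is (R+δ)/(r−δ)-Lipschitz on B(0,δ): for all d₁, d₂ ∈ B(0,δ), |h_x(d₁) − h_x(d₂)| ≤ ((R+δ)/(r−δ))·‖d₁ − d₂‖₂. -/

import Mathlib

open Metric

private lemma stmt10_key {n : ℕ} (K : Set (EuclideanSpace ℝ (Fin n)))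
    (hKcpt : IsCompact K) (hKconv : Convex ℝ K)
    (r R δ : ℝ) (hr : 0 < r) (hδ0 : 0 ≤ δ) (hδr : δ < r)
    (hinner : Metric.closedBall 0 r ⊆ K) (houter : K ⊆ Metric.closedBall 0 R)
    (x : EuclideanSpace ℝ (Fin n)) (hx : x ≠ 0)
    (d₁ : EuclideanSpace ℝ (Fin n)) (h1 : d₁ ∈ Metric.closedBall (0 : EuclideanSpace ℝ (Fin n)) δ)
    (d₂ : EuclideanSpace ℝ (Fin n)) (h2 : d₂ ∈ Metric.closedBall (0 : EuclideanSpace ℝ (Fin n)) δ) :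
    sSup {α : ℝ | d₁ + α • x ∈ K} - sSup {α : ℝ | d₂ + α • x ∈ K}
      ≤ (R + δ) / (r - δ) * ‖d₁ - d₂‖ / ‖x‖ := by
  have hxpos : (0:ℝ) < ‖x‖ := norm_pos_iff.mpr hx
  have ht : (0:ℝ) < r - δ := by linarith
  rw [mem_closedBall_zero_iff] at h1 h2
  have hR0 : (0:ℝ) ≤ R := by
    have h0K : (0 : EuclideanSpace ℝ (Fin n)) ∈ K :=
      hinner (Metric.mem_closedBall_self hr.le)
    have := houter h0K
    simpa using this
  -- basic facts about the sets
  have hmem : ∀ d : EuclideanSpace ℝ (Fin n), ‖d‖ ≤ δ → (0:ℝ) ∈ {α : ℝ | d + α • x ∈ K} := by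
    intro d hd
    simp only [Set.mem_setOf_eq, zero_smul, add_zero]
    exact hinner (mem_closedBall_zero_iff.mpr (le_trans hd (le_of_lt hδr)))
  have hbdd : ∀ d : EuclideanSpace ℝ (Fin n), ‖d‖ ≤ δ →
      BddAbove {α : ℝ | d + α • x ∈ K} := by
    intro d hd
    refine ⟨(R + δ) / ‖x‖, fun α hα => ?_⟩
    have hK := houter hα
    rw [mem_closedBall_zero_iff] at hK
    have : ‖α • x‖ ≤ R + δ := by
      calc ‖α • x‖ = ‖(d + α • x) - d‖ := by rw [add_sub_cancel_left]
        _ ≤ ‖d + α • x‖ + ‖d‖ := norm_sub_le _ _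
        _ ≤ R + δ := add_le_add hK hd
    rw [norm_smul, Real.norm_eq_abs] at this
    have hα' : |α| ≤ (R + δ) / ‖x‖ := (le_div_iff₀ hxpos).mpr this
    exact le_trans (le_abs_self α) hα'
  set S₁ := {α : ℝ | d₁ + α • x ∈ K}
  set S₂ := {α : ℝ | d₂ + α • x ∈ K}
  have hb1 := hbdd d₁ h1
  have hb2 := hbdd d₂ h2
  have hne1 : S₁.Nonempty := ⟨0, hmem d₁ h1⟩
  have hcl1 : IsClosed S₁ := by
    have : S₁ = (fun α : ℝ => d₁ + α • x) ⁻¹' K := rfl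
    rw [this]
    exact hKcpt.isClosed.preimage (continuous_const.add (continuous_id.smul continuous_const))
  set α₁ := sSup S₁ with hα₁def
  set α₂ := sSup S₂ with hα₂def
  have hα₁mem : α₁ ∈ S₁ := hcl1.csSup_mem hne1 hb1
  have hα₁0 : 0 ≤ α₁ := le_csSup hb1 (hmem d₁ h1)
  have hα₁ub : α₁ * ‖x‖ ≤ R + δ := by
    have hK := houter hα₁mem
    rw [mem_closedBall_zero_iff] at hK
    have : ‖α₁ • x‖ ≤ R + δ := by
      calc ‖α₁ • x‖ = ‖(d₁ + α₁ • x) - d₁‖ := by rw [add_sub_cancel_left]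
        _ ≤ ‖d₁ + α₁ • x‖ + ‖d₁‖ := norm_sub_le _ _
        _ ≤ R + δ := add_le_add hK h1
    rwa [norm_smul, Real.norm_eq_abs, abs_of_nonneg hα₁0] at this
  set s := ‖d₁ - d₂‖ with hsdef
  rcases eq_or_lt_of_le (norm_nonneg (d₁ - d₂)) with hs0 | hs
  · -- d₁ = d₂
    have : d₁ = d₂ := by
      have : d₁ - d₂ = 0 := norm_eq_zero.mp hs0.symm
      linear_combination (norm := module) this
    subst this
    have : α₁ - α₂ = 0 := sub_self _
    rw [this]
    positivity
  · -- main case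
    set lam := (r - δ) / (s + (r - δ)) with hlamdef
    have hst : 0 < s + (r - δ) := by linarith
    have hlam0 : 0 < lam := div_pos ht hst
    have hlam1 : lam ≤ 1 := by
      rw [div_le_one hst]; linarith
    have h1lam : 1 - lam = s / (s + (r - δ)) := by
      rw [hlamdef]; field_simp; ring
    -- the auxiliary point u
    set u := d₂ - ((r - δ) / s) • (d₁ - d₂) with hudef
    have huK : u ∈ K := by
      apply hinner
      rw [mem_closedBall_zero_iff]
      calc ‖u‖ ≤ ‖d₂‖ + ‖((r - δ) / s) • (d₁ - d₂)‖ := norm_sub_le _ _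
        _ = ‖d₂‖ + ((r - δ) / s) * s := by
            rw [norm_smul, Real.norm_eq_abs, abs_of_nonneg (le_of_lt (div_pos ht hs))]
        _ = ‖d₂‖ + (r - δ) := by rw [div_mul_cancel₀ _ (show s ≠ 0 from ne_of_gt hs)]
        _ ≤ r := by linarith
    have hcomb : lam • (d₁ + α₁ • x) + (1 - lam) • u ∈ K :=
      hKconv hα₁mem huK (le_of_lt hlam0) (by linarith) (by ring)
    have heq : lam • (d₁ + α₁ • x) + (1 - lam) • u = d₂ + (lam * α₁) • x := by
      rw [hudef, hlamdef]
      match_scalars <;> field_simp [show s ≠ 0 from ne_of_gt hs] <;> ring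
    rw [heq] at hcomb
    have hle : lam * α₁ ≤ α₂ := le_csSup hb2 hcomb
    have key : α₁ - α₂ ≤ (1 - lam) * α₁ := by nlinarith
    have h2' : (1 - lam) * α₁ ≤ s / (r - δ) * α₁ := by
      apply mul_le_mul_of_nonneg_right _ hα₁0
      rw [h1lam]
      apply div_le_div_of_nonneg_left (le_of_lt hs) ht
      linarith
    have h3' : s / (r - δ) * α₁ ≤ (R + δ) / (r - δ) * s / ‖x‖ := by
      have hα₁ub' : α₁ ≤ (R + δ) / ‖x‖ := (le_div_iff₀ hxpos).mpr hα₁ub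
      calc s / (r - δ) * α₁ ≤ s / (r - δ) * ((R + δ) / ‖x‖) := by
            apply mul_le_mul_of_nonneg_left hα₁ub' (by positivity)
        _ = (R + δ) / (r - δ) * s / ‖x‖ := by ring
    linarith

/-- Let `K ⊆ ℝⁿ` be a compact convex set with `B(0,r) ⊆ K ⊆ B(0,R)`,
`0 < r ≤ R`, let `0 ≤ δ < r`, and let `x ≠ 0`. With `α_x(d) = max {α : d + α • x ∈ K}` and
`h_x(d) = −α_x(d) ‖x‖₂`, the function `h_x` is `(R+δ)/(r−δ)`-Lipschitz on `B(0,δ)`. -/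
theorem stmt10 {n : ℕ} (K : Set (EuclideanSpace ℝ (Fin n)))
    (hKcpt : IsCompact K) (hKconv : Convex ℝ K)
    (r R δ : ℝ) (hr : 0 < r) (hrR : r ≤ R) (hδ0 : 0 ≤ δ) (hδr : δ < r)
    (hinner : Metric.closedBall 0 r ⊆ K) (houter : K ⊆ Metric.closedBall 0 R)
    (x : EuclideanSpace ℝ (Fin n)) (hx : x ≠ 0) :
    ∀ d₁ ∈ Metric.closedBall (0 : EuclideanSpace ℝ (Fin n)) δ,
      ∀ d₂ ∈ Metric.closedBall (0 : EuclideanSpace ℝ (Fin n)) δ,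
        |(-(sSup {α : ℝ | d₁ + α • x ∈ K}) * ‖x‖) - (-(sSup {α : ℝ | d₂ + α • x ∈ K}) * ‖x‖)|
          ≤ (R + δ) / (r - δ) * ‖d₁ - d₂‖ := by
  intro d₁ h1 d₂ h2
  have hxpos : (0:ℝ) < ‖x‖ := norm_pos_iff.mpr hx
  have k12 := stmt10_key K hKcpt hKconv r R δ hr hδ0 hδr hinner houter x hx d₁ h1 d₂ h2
  have k21 := stmt10_key K hKcpt hKconv r R δ hr hδ0 hδr hinner houter x hx d₂ h2 d₁ h1
  rw [norm_sub_rev d₂ d₁] at k21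
  set a := sSup {α : ℝ | d₁ + α • x ∈ K}
  set b := sSup {α : ℝ | d₂ + α • x ∈ K}
  have hrw : (-a * ‖x‖) - (-b * ‖x‖) = (b - a) * ‖x‖ := by ring
  rw [hrw, abs_mul, abs_of_pos hxpos]
  have : |b - a| ≤ (R + δ) / (r - δ) * ‖d₁ - d₂‖ / ‖x‖ := abs_sub_le_iff.mpr ⟨k21, k12⟩
  calc |b - a| * ‖x‖ ≤ ((R + δ) / (r - δ) * ‖d₁ - d₂‖ / ‖x‖) * ‖x‖ :=
        mul_le_mul_of_nonneg_right this (le_of_lt hxpos)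
    _ = (R + δ) / (r - δ) * ‖d₁ - d₂‖ := div_mul_cancel₀ _ (ne_of_gt hxpos)
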